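/- For a polynomial p ∈ K[x₁,...,xₙ], the outer rank of p is at least the minimal number of generators (rank) of the ideal generated by the partial derivatives of p; in particular, if p depends, after applying some automorphism, on only one variable x₁, then the ideal generated by the partial derivatives of p is generated by one element up to the automorphism. -/
import Mathlib


open MvPolynomial

private lemma chain_rule {K : Type*} [Field K] {n : ℕ}
    (f : Fin n → MvPolynomial (Fin n) K) (r : MvPolynomial (Fin n) K) (i : Fin n) :
    pderiv i (aeval f r) = ∑ j, aeval f (pderiv j r) * pderiv i (f j) := by
  induction r using MvPolynomial.induction_on with
  | C a => simp
  | add p q hp hq =>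
      rw [map_add, map_add, hp, hq, ← Finset.sum_add_distrib]
      refine Finset.sum_congr rfl fun l _ => ?_
      simp [add_mul]
  | mul_X p j hp =>
      have key : ∀ l : Fin n, aeval f (pderiv l (p * X j)) * pderiv i (f l)
          = f j * (aeval f (pderiv l p) * pderiv i (f l))
            + (if l = j then aeval f p * pderiv i (f l) else 0) := by
        intro l
        rw [Derivation.leibniz]
        by_cases hl : l = j
        · subst hl; rw [pderiv_X_self]
          simp only [smul_eq_mul, mul_one, map_add, map_mul, aeval_X, if_true]
          ring
        · rw [pderiv_X_of_ne (Ne.symm hl)]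
          simp only [smul_eq_mul, mul_zero, map_add, map_mul, aeval_X, if_neg hl, map_zero,
            zero_add, add_zero]
          ring
      rw [Finset.sum_congr rfl (fun l _ => key l), Finset.sum_add_distrib, ← Finset.mul_sum,
        ← hp, Finset.sum_ite_eq', if_pos (Finset.mem_univ j), map_mul, aeval_X,
        Derivation.leibniz]
      simp only [smul_eq_mul]
      ring

private lemma aeval_comp_X {K : Type*} [Field K] {n : ℕ}
    (φ : MvPolynomial (Fin n) K →ₐ[K] MvPolynomial (Fin n) K) (r : MvPolynomial (Fin n) K) :
    aeval (fun j => φ (X j)) r = φ r := by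
  conv_rhs => rw [aeval_unique φ]
  rfl

theorem orank_ge_rank_of_gradient_ideal (K : Type*) [Field K] [CharZero K]
    (n : ℕ) (p : MvPolynomial (Fin n) K) (k : ℕ)
    (h : ∃ ψ : MvPolynomial (Fin n) K ≃ₐ[K] MvPolynomial (Fin n) K,
      ψ p ∈ MvPolynomial.supported K {i : Fin n | (i : ℕ) < k}) :
    ∃ S : Finset (MvPolynomial (Fin n) K), S.card ≤ k ∧
      Ideal.span (S : Set (MvPolynomial (Fin n) K)) =
      Ideal.span (Set.range fun i : Fin n => pderiv i p) := by
  classical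
  obtain ⟨ψ, hq⟩ := h
  set q : MvPolynomial (Fin n) K := ψ p with hqdef
  have hzero : ∀ j : Fin n, ¬ (j : ℕ) < k → pderiv j q = 0 := by
    intro j hj
    refine pderiv_eq_zero_of_notMem_vars fun hmem => ?_
    exact hj ((MvPolynomial.mem_supported.mp hq) hmem)
  set T : Finset (Fin n) := Finset.univ.filter fun j : Fin n => (j : ℕ) < k with hT
  refine ⟨T.image fun j => ψ.symm (pderiv j q), ?_, ?_⟩
  · calc (T.image fun j => ψ.symm (pderiv j q)).card ≤ T.card := Finset.card_image_le
      _ = (T.image Fin.val).card := (Finset.card_image_of_injective _ Fin.val_injective).symm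
      _ ≤ (Finset.range k).card := by
          refine Finset.card_le_card fun m hm => ?_
          simp only [Finset.mem_image, hT, Finset.mem_filter, Finset.mem_univ, true_and] at hm
          obtain ⟨j, hj, rfl⟩ := hm
          exact Finset.mem_range.mpr hj
      _ = k := Finset.card_range k
  · apply le_antisymm
    · rw [Ideal.span_le]
      rintro s hs
      simp only [Finset.coe_image, Set.mem_image, Finset.mem_coe, hT, Finset.mem_filter,
        Finset.mem_univ, true_and] at hs
      obtain ⟨j, hj, rfl⟩ := hs
      have hpq : q = aeval (fun l => ψ (X l)) p := by
        have h1 : aeval (fun l => ψ (X l)) p = ψ p := aeval_comp_X ψ.toAlgHom p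
        rw [h1]
      have : ψ.symm (pderiv j q) =
          ∑ l, pderiv l p * ψ.symm (pderiv j (ψ (X l))) := by
        rw [hpq, chain_rule, map_sum]
        refine Finset.sum_congr rfl fun l _ => ?_
        rw [map_mul]
        congr 1
        have h2 : aeval (fun l => ψ (X l)) (pderiv l p) = ψ (pderiv l p) :=
          aeval_comp_X ψ.toAlgHom _
        rw [h2]
        exact ψ.symm_apply_apply _
      rw [this]
      exact Ideal.sum_mem _ fun l _ =>
        Ideal.mul_mem_right _ _ (Ideal.subset_span ⟨l, rfl⟩)
    · rw [Ideal.span_le]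
      rintro s ⟨i, rfl⟩
      have hpq : p = aeval (fun l => ψ.symm (X l)) q := by
        have h1 : aeval (fun l => ψ.symm (X l)) q = ψ.symm q := aeval_comp_X ψ.symm.toAlgHom q
        rw [h1, hqdef, ψ.symm_apply_apply]
      have : pderiv i p = ∑ j, ψ.symm (pderiv j q) * pderiv i (ψ.symm (X j)) := by
        conv_lhs => rw [hpq]
        rw [chain_rule]
        refine Finset.sum_congr rfl fun j _ => ?_
        have h2 : aeval (fun l => ψ.symm (X l)) (pderiv j q) = ψ.symm (pderiv j q) :=
          aeval_comp_X ψ.symm.toAlgHom _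
        rw [h2]
      show pderiv i p ∈ _
      rw [this]
      refine Ideal.sum_mem _ fun j _ => ?_
      by_cases hj : (j : ℕ) < k
      · refine Ideal.mul_mem_right _ _ (Ideal.subset_span ?_)
        simp only [Finset.coe_image, Set.mem_image, Finset.mem_coe, hT, Finset.mem_filter,
          Finset.mem_univ, true_and]
        exact ⟨j, hj, rfl⟩
      · rw [hzero j hj, map_zero, zero_mul]
        exact Ideal.zero_mem _
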